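/- Let 𝓟 and 𝓔 be nonempty sets of density matrices on ℂ^d, and let t ∈ (0,1) (in the paper, t = 2^{−nr} with n ≥ 1 and rate r > 0). Then the infimum of ε ∈ [0,1] such that there exists a CPTP map F from d×d complex matrices to 2×2 complex matrices with T(F(ρ), |1⟩⟨1|) ≤ ε for all ρ ∈ 𝓟 and such that for every τ ∈ 𝓔 there exists M_τ ∈ [1/t, ∞) with F(τ) = π_{M_τ}, equals the infimum of sup_{ρ∈𝓟} tr[(I−E)ρ] over all tests E (Hermitian with 0 ≤ E ≤ I) satisfying sup_{τ∈𝓔} tr[Eτ] ≤ t. -/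

import Mathlib

open Matrix ComplexOrder

/-- Trace norm of a complex matrix: the trace of `sqrt(AᴴA)` (sum of singular values). -/
noncomputable def traceNorm {n : Type*} [Fintype n] [DecidableEq n]
    (A : Matrix n n ℂ) : ℝ :=
  (((Matrix.posSemidef_conjTranspose_mul_self A).1.eigenvectorUnitary : Matrix n n ℂ) *
      Matrix.diagonal ((fun x : ℝ => (x : ℂ)) ∘ Real.sqrt ∘ (Matrix.posSemidef_conjTranspose_mul_self A).1.eigenvalues) *
      (star (Matrix.posSemidef_conjTranspose_mul_self A).1.eigenvectorUnitary : Matrix n n ℂ)).trace.re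

/-- Trace distance `T(X,Y) = ‖X - Y‖₁ / 2`. -/
noncomputable def traceDist {n : Type*} [Fintype n] [DecidableEq n]
    (X Y : Matrix n n ℂ) : ℝ :=
  traceNorm (X - Y) / 2

/-- A density matrix: positive semidefinite with unit trace. -/
def IsDensityMatrix {n : Type*} [Fintype n] (ρ : Matrix n n ℂ) : Prop :=
  ρ.PosSemidef ∧ ρ.trace = 1

/-- The battery Gibbs state `π_M = diag(1 - 1/M, 1/M)`. -/
noncomputable def piM (M : ℝ) : Matrix (Fin 2) (Fin 2) ℂ :=
  Matrix.diagonal ![((1 - 1/M : ℝ) : ℂ), ((1/M : ℝ) : ℂ)]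

/-- The excited battery state `|1⟩⟨1| = diag(0,1)`. -/
def ket1 : Matrix (Fin 2) (Fin 2) ℂ :=
  Matrix.diagonal ![0, 1]

/-- A test (POVM effect): `0 ≤ E ≤ I`. -/
def IsTest {n : Type*} [Fintype n] [DecidableEq n] (E : Matrix n n ℂ) : Prop :=
  E.PosSemidef ∧ (1 - E).PosSemidef

/-- Choi matrix `Σ_{ij} E_{ij} ⊗ F(E_{ij})` of a linear map on matrices. -/
noncomputable def choiMatrix {n m : Type*} [Fintype n] [DecidableEq n] [Fintype m]
    (F : Matrix n n ℂ →ₗ[ℂ] Matrix m m ℂ) :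
    Matrix (n × m) (n × m) ℂ :=
  fun p q => F (Matrix.single p.1 q.1 1) p.2 q.2

/-- Completely positive (positive semidefinite Choi matrix) and trace preserving. -/
def IsCPTP {n m : Type*} [Fintype n] [DecidableEq n] [Fintype m]
    (F : Matrix n n ℂ →ₗ[ℂ] Matrix m m ℂ) : Prop :=
  (choiMatrix F).PosSemidef ∧ ∀ X, (F X).trace = X.trace

/-- `n`-fold Kronecker (tensor) power of a `2 × 2` matrix, indexed by bit strings. -/
def tensPow (A : Matrix (Fin 2) (Fin 2) ℂ) (n : ℕ) :
    Matrix (Fin n → Fin 2) (Fin n → Fin 2) ℂ :=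
  fun x y => ∏ i, A (x i) (y i)

/-- `ε`-ball (in trace distance) of density matrices around a set `𝓟`. -/
noncomputable def metBall {n : Type*} [Fintype n] [DecidableEq n]
    (ε : ℝ) (P : Set (Matrix n n ℂ)) : Set (Matrix n n ℂ) :=
  {ω | IsDensityMatrix ω ∧ ∃ ρ ∈ P, traceDist ω ρ ≤ ε}

/-! ### Auxiliary lemmas -/


lemma psd_diag_nonneg {n : Type*} [Fintype n] [DecidableEq n] {M : Matrix n n ℂ}
    (hM : M.PosSemidef) (i : n) : 0 ≤ M i i := by
  exact hM.diag_nonneg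

lemma psd_trace_nonneg {n : Type*} [Fintype n] [DecidableEq n] {M : Matrix n n ℂ}
    (hM : M.PosSemidef) : 0 ≤ M.trace :=
  Finset.sum_nonneg fun i _ => psd_diag_nonneg hM i

lemma trace_mul_psd_nonneg {n : Type*} [Fintype n] [DecidableEq n]
    {A B : Matrix n n ℂ} (hA : A.PosSemidef) (hB : B.PosSemidef) :
    0 ≤ (A * B).trace := by
  open scoped MatrixOrder in
  obtain ⟨S, hS, hSS⟩ : ∃ S : Matrix n n ℂ, S.PosSemidef ∧ S * S = A :=
    ⟨CFC.sqrt A, Matrix.nonneg_iff_posSemidef.mp (CFC.sqrt_nonneg A),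
      CFC.sqrt_mul_sqrt_self A (Matrix.nonneg_iff_posSemidef.mpr hA)⟩
  have h1 : A * B = S * S * B := by rw [hSS]
  have h2 : (S * S * B).trace = (S * B * S).trace := by
    rw [Matrix.trace_mul_cycle, Matrix.trace_mul_comm, Matrix.mul_assoc]
  have h3 : (Sᴴ * B * S).PosSemidef := hB.conjTranspose_mul_mul_same S
  rw [hS.1.eq] at h3
  rw [h1, h2]
  exact psd_trace_nonneg h3

lemma cnonneg_real {z : ℂ} (h : 0 ≤ z) : z = (z.re : ℂ) := by
  have him := (Complex.le_def.mp h).2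
  apply Complex.ext
  · rfl
  · simpa using him.symm

lemma cnonneg_re {z : ℂ} (h : 0 ≤ z) : 0 ≤ z.re := (Complex.le_def.mp h).1

lemma psd_smul_real {n : Type*} [Fintype n] {M : Matrix n n ℂ} (hM : M.PosSemidef)
    {a : ℝ} (ha : 0 ≤ a) : ((a : ℂ) • M).PosSemidef := by
  refine ⟨?_, fun x => ?_⟩
  · unfold Matrix.IsHermitian
    rw [Matrix.conjTranspose_smul, hM.1.eq]
    congr 1
    simp
  · exact (hM.smul (Complex.zero_le_real.mpr ha)).2 x

lemma traceNorm_two (Δ : Matrix (Fin 2) (Fin 2) ℂ) (hH : Δ.IsHermitian)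
    (htr : Δ.trace = 0) :
    traceNorm Δ = 2 * Real.sqrt ((Δ 0 0).re ^ 2 + Complex.normSq (Δ 0 1)) := by
  set a : ℝ := (Δ 0 0).re with ha
  set c : ℝ := a ^ 2 + Complex.normSq (Δ 0 1) with hc
  have hc0 : 0 ≤ c := add_nonneg (sq_nonneg a) (Complex.normSq_nonneg _)
  have h00 : Δ 0 0 = (a : ℂ) := (hH.coe_re_apply_self 0).symm
  have h11 : Δ 1 1 = -(a : ℂ) := by
    have : Δ 0 0 + Δ 1 1 = 0 := by
      simpa [Matrix.trace, Matrix.diag, Fin.sum_univ_two] using htr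
    rw [h00] at this; linear_combination this
  have h10 : Δ 1 0 = star (Δ 0 1) := by
    have := congrFun (congrFun hH.eq 1) 0
    simpa [Matrix.conjTranspose_apply] using this.symm
  set B : Matrix (Fin 2) (Fin 2) ℂ := Matrix.diagonal (fun _ => ((Real.sqrt c : ℝ) : ℂ)) with hB
  have hBpsd : B.PosSemidef := Matrix.PosSemidef.diagonal (fun _ =>
    Complex.zero_le_real.mpr (Real.sqrt_nonneg c))
  have hsq : B ^ 2 = Δᴴ * Δ := by
    rw [hH.eq, pow_two, hB, Matrix.diagonal_mul_diagonal]
    ext i j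
    fin_cases i <;> fin_cases j <;>
      simp [Matrix.mul_apply, Fin.sum_univ_two, Matrix.diagonal, h00, h11, h10,
        ← Complex.ofReal_mul, Real.mul_self_sqrt hc0, hc, Complex.mul_conj,
        Complex.normSq_eq_conj_mul_self,
          Real.mul_self_sqrt (add_nonneg (sq_nonneg a) (Complex.normSq_nonneg (Δ 0 1))),
          Real.sq_sqrt (add_nonneg (sq_nonneg a) (Complex.normSq_nonneg (Δ 0 1)))] <;> push_cast <;> ring
  have hcfc : traceNorm Δ = (cfc Real.sqrt (Δᴴ * Δ)).trace.re := by
    rw [traceNorm, (Matrix.posSemidef_conjTranspose_mul_self Δ).1.cfc_eq]; rfl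
  have hBc : B ^ 2 = algebraMap ℝ (Matrix (Fin 2) (Fin 2) ℂ) c := by
    rw [hB, Matrix.diagonal_pow]
    ext i j
    fin_cases i <;> fin_cases j <;>
      simp [Matrix.algebraMap_matrix_apply, Matrix.diagonal, ← Complex.ofReal_pow, Real.sq_sqrt hc0]
  rw [hcfc, ← hsq, hBc, cfc_algebraMap]
  simp [Matrix.algebraMap_matrix_apply, Matrix.trace, Matrix.diag, Fin.sum_univ_two]

lemma traceDist_diag_ket1 {x y : ℝ} (hx : 0 ≤ x) (hxy : x + y = 1) :
    traceDist (Matrix.diagonal ![(x:ℂ), (y:ℂ)]) ket1 = x := by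
  have hΔ : Matrix.diagonal ![(x:ℂ), (y:ℂ)] - ket1
      = Matrix.diagonal ![(x:ℂ), ((y-1:ℝ):ℂ)] := by
    ext i j
    fin_cases i <;> fin_cases j <;>
      simp [ket1, Matrix.diagonal]
  have hH : (Matrix.diagonal ![(x:ℂ), ((y-1:ℝ):ℂ)]).IsHermitian := by
    show _ᴴ = _
    ext i j
    fin_cases i <;> fin_cases j <;> simp [Matrix.diagonal, Matrix.conjTranspose_apply]
  have htr : (Matrix.diagonal ![(x:ℂ), ((y-1:ℝ):ℂ)]).trace = 0 := by
    simp [Matrix.trace, Matrix.diag, Fin.sum_univ_two, Matrix.diagonal]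
    rw [show ((x:ℝ):ℂ) + (((y:ℝ):ℂ) - 1) = (((x + y - 1 : ℝ)) : ℂ) by push_cast; ring]
    rw [hxy]; norm_num
  rw [traceDist, hΔ, traceNorm_two _ hH htr]
  have h00 : (Matrix.diagonal ![(x:ℂ), ((y-1:ℝ):ℂ)]) 0 0 = (x : ℂ) := by simp
  have h01 : (Matrix.diagonal ![(x:ℂ), ((y-1:ℝ):ℂ)]) 0 1 = 0 := by simp
  rw [h00, h01]
  simp [Real.sqrt_sq hx]

lemma trace_mul_stdBasis {d : ℕ} (A : Matrix (Fin d) (Fin d) ℂ) (i j : Fin d) :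
    (A * Matrix.single i j 1).trace = A j i := by
  simp [Matrix.trace, Matrix.diag, Matrix.mul_apply, Matrix.single, Matrix.of_apply,
    Finset.sum_ite_eq, ite_and]

/-- The measure-and-prepare channel associated with a test. -/
noncomputable def chan2 {d : ℕ} (E : Matrix (Fin d) (Fin d) ℂ) :
    Matrix (Fin d) (Fin d) ℂ →ₗ[ℂ] Matrix (Fin 2) (Fin 2) ℂ where
  toFun X := Matrix.diagonal ![((1 - E) * X).trace, (E * X).trace]
  map_add' X Y := by
    ext i j
    fin_cases i <;> fin_cases j <;>
      simp [Matrix.mul_add, Matrix.diagonal]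
  map_smul' c X := by
    ext i j
    fin_cases i <;> fin_cases j <;>
      simp [Matrix.mul_smul, Matrix.diagonal]

lemma chan2_apply {d : ℕ} (E : Matrix (Fin d) (Fin d) ℂ) (X : Matrix (Fin d) (Fin d) ℂ) :
    chan2 E X = Matrix.diagonal ![((1 - E) * X).trace, (E * X).trace] := rfl

lemma choi_chan2 {d : ℕ} (E : Matrix (Fin d) (Fin d) ℂ) (i j : Fin d) (b b' : Fin 2) :
    choiMatrix (chan2 E) (i, b) (j, b') =
      if b = b' then (if b = 0 then (1 - E) j i else E j i) else 0 := by
  rw [choiMatrix, chan2_apply]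
  rcases b with _|_|b <;> rcases b' with _|_|b' <;>
    simp [Matrix.diagonal, trace_mul_stdBasis] <;> omega

lemma chan2_cptp {d : ℕ} {E : Matrix (Fin d) (Fin d) ℂ}
    (hE : E.PosSemidef) (hE' : (1 - E).PosSemidef) : IsCPTP (chan2 E) := by
  constructor
  · apply Matrix.PosSemidef.of_dotProduct_mulVec_nonneg
    · show (choiMatrix (chan2 E))ᴴ = choiMatrix (chan2 E)
      ext ⟨i, b⟩ ⟨j, b'⟩
      rw [Matrix.conjTranspose_apply, choi_chan2, choi_chan2]
      rcases eq_or_ne b b' with h | h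
      · subst h
        simp only [if_pos rfl]
        by_cases hb : b = 0
        · simp only [if_pos hb]
          exact congrFun (congrFun hE'.1.eq j) i
        · simp only [if_neg hb]
          exact congrFun (congrFun hE.1.eq j) i
      · rw [if_neg h, if_neg (Ne.symm h), star_zero]
    · intro x
      have key : dotProduct (star x) ((choiMatrix (chan2 E)) *ᵥ x) =
          dotProduct (star (fun i => x (i, 0))) ((1 - E)ᵀ *ᵥ (fun i => x (i, 0)))
          + dotProduct (star (fun i => x (i, 1))) (Eᵀ *ᵥ (fun i => x (i, 1))) := by
        simp only [dotProduct, Matrix.mulVec, Fintype.sum_prod_type, Fin.sum_univ_two,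
          choi_chan2, Pi.star_apply, Matrix.transpose_apply, dotProduct]
        simp only [Finset.mul_sum]
        rw [← Finset.sum_add_distrib]
        refine Finset.sum_congr rfl fun i _ => ?_
        simp [Finset.mul_sum, ← Finset.sum_add_distrib]
      rw [key]
      exact add_nonneg (hE'.transpose.dotProduct_mulVec_nonneg _) (hE.transpose.dotProduct_mulVec_nonneg _)
  · intro X
    rw [chan2_apply]
    simp only [Matrix.trace_diagonal, Fin.sum_univ_two]
    show ((1 - E) * X).trace + (E * X).trace = _
    rw [← Matrix.trace_add, ← Matrix.add_mul]
    simp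

lemma FX_entry {d : ℕ} (F : Matrix (Fin d) (Fin d) ℂ →ₗ[ℂ] Matrix (Fin 2) (Fin 2) ℂ)
    (X : Matrix (Fin d) (Fin d) ℂ) (b b' : Fin 2) :
    F X b b' = ∑ k, ∑ l, X k l * choiMatrix F (k, b) (l, b') := by
  have hX : F X = ∑ k, ∑ l, X k l • F (Matrix.single k l 1) := by
    conv_lhs => rw [Matrix.matrix_eq_sum_single X]
    rw [map_sum]
    refine Finset.sum_congr rfl fun k _ => ?_
    rw [map_sum]
    refine Finset.sum_congr rfl fun l _ => ?_
    rw [← _root_.map_smul, Matrix.smul_single, smul_eq_mul, mul_one]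
  rw [hX]
  simp [Matrix.sum_apply, choiMatrix]

lemma FX_herm {d : ℕ} (F : Matrix (Fin d) (Fin d) ℂ →ₗ[ℂ] Matrix (Fin 2) (Fin 2) ℂ)
    {X : Matrix (Fin d) (Fin d) ℂ} (hC : (choiMatrix F).IsHermitian)
    (hX : X.IsHermitian) : (F X).IsHermitian := by
  ext b b'
  rw [Matrix.conjTranspose_apply, FX_entry, FX_entry]
  rw [star_sum]
  rw [Finset.sum_comm]
  refine Finset.sum_congr rfl fun k _ => ?_
  rw [star_sum]
  refine Finset.sum_congr rfl fun l _ => ?_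
  rw [star_mul']
  congr 1
  · exact congrFun (congrFun hX.eq l) k
  · exact congrFun (congrFun hC.eq (l, b)) (k, b')

lemma trace_Eb {d : ℕ} (F : Matrix (Fin d) (Fin d) ℂ →ₗ[ℂ] Matrix (Fin 2) (Fin 2) ℂ)
    (X : Matrix (Fin d) (Fin d) ℂ) (b : Fin 2) :
    (((choiMatrix F).submatrix (fun i => (i, b)) (fun i => (i, b)))ᵀ * X).trace
      = F X b b := by
  rw [FX_entry]
  simp only [Matrix.trace, Matrix.diag, Matrix.mul_apply, Matrix.transpose_apply,
    Matrix.submatrix_apply]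
  rw [Finset.sum_comm]
  exact Finset.sum_congr rfl fun k _ => Finset.sum_congr rfl fun l _ => mul_comm _ _

lemma tr_split {d : ℕ} (E ρ : Matrix (Fin d) (Fin d) ℂ) (hρt : ρ.trace = 1) :
    ((1 - E) * ρ).trace = 1 - (E * ρ).trace := by
  rw [Matrix.sub_mul, Matrix.one_mul, Matrix.trace_sub, hρt]


/-- the optimal error for work extraction into a dirty battery at
type-II threshold `t` equals the optimal constrained hypothesis-testing error. -/
theorem stmt_13 {d : ℕ} (t : ℝ) (ht : t ∈ Set.Ioo (0:ℝ) 1)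
    (𝓟 𝓔 : Set (Matrix (Fin d) (Fin d) ℂ))
    (h𝓟ne : 𝓟.Nonempty) (h𝓔ne : 𝓔.Nonempty)
    (h𝓟 : ∀ ρ ∈ 𝓟, IsDensityMatrix ρ) (h𝓔 : ∀ τ ∈ 𝓔, IsDensityMatrix τ) :
    sInf {e : ℝ | e ∈ Set.Icc (0:ℝ) 1 ∧
        ∃ F : Matrix (Fin d) (Fin d) ℂ →ₗ[ℂ] Matrix (Fin 2) (Fin 2) ℂ,
          IsCPTP F ∧ (∀ ρ ∈ 𝓟, traceDist (F ρ) ket1 ≤ e) ∧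
          ∀ τ ∈ 𝓔, ∃ Mτ : ℝ, 1/t ≤ Mτ ∧ F τ = piM Mτ} =
      sInf {a : ℝ | ∃ E : Matrix (Fin d) (Fin d) ℂ, IsTest E ∧
        (∀ τ ∈ 𝓔, (E * τ).trace.re ≤ t) ∧
        a = sSup {r : ℝ | ∃ ρ ∈ 𝓟, r = ((1 - E) * ρ).trace.re}} := by
  obtain ⟨ht0, ht1⟩ := ht
  set A : Set ℝ := {e : ℝ | e ∈ Set.Icc (0:ℝ) 1 ∧
        ∃ F : Matrix (Fin d) (Fin d) ℂ →ₗ[ℂ] Matrix (Fin 2) (Fin 2) ℂ,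
          IsCPTP F ∧ (∀ ρ ∈ 𝓟, traceDist (F ρ) ket1 ≤ e) ∧
          ∀ τ ∈ 𝓔, ∃ Mτ : ℝ, 1/t ≤ Mτ ∧ F τ = piM Mτ} with hAdef
  set B : Set ℝ := {a : ℝ | ∃ E : Matrix (Fin d) (Fin d) ℂ, IsTest E ∧
        (∀ τ ∈ 𝓔, (E * τ).trace.re ≤ t) ∧
        a = sSup {r : ℝ | ∃ ρ ∈ 𝓟, r = ((1 - E) * ρ).trace.re}} with hBdef
  -- basic facts about tests against densities
  have tfacts : ∀ (E ω : Matrix (Fin d) (Fin d) ℂ), IsTest E → IsDensityMatrix ω →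
      (E * ω).trace = (((E * ω).trace.re : ℝ) : ℂ) ∧ 0 ≤ (E * ω).trace.re ∧
      ((1 - E) * ω).trace = (((1 - (E * ω).trace.re : ℝ)) : ℂ) ∧ (E * ω).trace.re ≤ 1 := by
    intro E ω hE hω
    have h1 : 0 ≤ (E * ω).trace := trace_mul_psd_nonneg hE.1 hω.1
    have h2 : 0 ≤ ((1 - E) * ω).trace := trace_mul_psd_nonneg hE.2 hω.1
    have h3 := tr_split E ω hω.2
    refine ⟨cnonneg_real h1, cnonneg_re h1, ?_, ?_⟩
    · rw [h3, cnonneg_real h1]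
      simp
    · have := cnonneg_re h2
      rw [h3] at this
      simp at this
      linarith
  -- the inner supremum set for a test E
  have Sfacts : ∀ (E : Matrix (Fin d) (Fin d) ℂ), IsTest E →
      {r : ℝ | ∃ ρ ∈ 𝓟, r = ((1 - E) * ρ).trace.re}.Nonempty ∧
      BddAbove {r : ℝ | ∃ ρ ∈ 𝓟, r = ((1 - E) * ρ).trace.re} ∧
      0 ≤ sSup {r : ℝ | ∃ ρ ∈ 𝓟, r = ((1 - E) * ρ).trace.re} ∧
      sSup {r : ℝ | ∃ ρ ∈ 𝓟, r = ((1 - E) * ρ).trace.re} ≤ 1 := by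
    intro E hE
    obtain ⟨ρ₀, hρ₀⟩ := h𝓟ne
    have hmem : ∀ r ∈ {r : ℝ | ∃ ρ ∈ 𝓟, r = ((1 - E) * ρ).trace.re}, 0 ≤ r ∧ r ≤ 1 := by
      rintro r ⟨ρ, hρ, rfl⟩
      obtain ⟨_, hu0, hv, hu1⟩ := tfacts E ρ hE (h𝓟 ρ hρ)
      rw [hv]
      constructor
      · simp; linarith
      · simp; linarith
    have hne : {r : ℝ | ∃ ρ ∈ 𝓟, r = ((1 - E) * ρ).trace.re}.Nonempty :=
      ⟨((1 - E) * ρ₀).trace.re, ρ₀, hρ₀, rfl⟩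
    have hbdd : BddAbove {r : ℝ | ∃ ρ ∈ 𝓟, r = ((1 - E) * ρ).trace.re} :=
      ⟨1, fun r hr => (hmem r hr).2⟩
    refine ⟨hne, hbdd, ?_, ?_⟩
    · obtain ⟨r, hr⟩ := hne
      exact le_trans (hmem r hr).1 (le_csSup hbdd hr)
    · exact csSup_le hne fun r hr => (hmem r hr).2
  -- the key construction: from a feasible test, a feasible channel
  have hcons : ∀ (E : Matrix (Fin d) (Fin d) ℂ), IsTest E →
      (∀ τ ∈ 𝓔, (E * τ).trace.re ≤ t) → ∀ l : ℝ, 0 < l → l ≤ 1/2 →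
      ∃ e ∈ A, e ≤ (1 - l) * sSup {r : ℝ | ∃ ρ ∈ 𝓟, r = ((1 - E) * ρ).trace.re}
        + l * (1 - t) := by
    intro E hE hconstr l hl0 hl12
    set E' : Matrix (Fin d) (Fin d) ℂ :=
      ((1 - l : ℝ) : ℂ) • E + ((l * t : ℝ) : ℂ) • 1 with hE'def
    have hE'1 : E'.PosSemidef :=
      (psd_smul_real hE.1 (by linarith)).add
        (psd_smul_real Matrix.PosSemidef.one (by positivity))
    have hsub : (1 : Matrix (Fin d) (Fin d) ℂ) - E' =
        ((1 - l : ℝ) : ℂ) • (1 - E) + ((l * (1 - t) : ℝ) : ℂ) • 1 := by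
      rw [hE'def]
      ext i j
      by_cases h : i = j <;>
        simp [Matrix.sub_apply, Matrix.add_apply, Matrix.smul_apply, Matrix.one_apply, h,
          smul_eq_mul] <;> push_cast <;> ring
    have hE'2 : (1 - E').PosSemidef := by
      rw [hsub]
      exact (psd_smul_real hE.2 (by linarith)).add
        (psd_smul_real Matrix.PosSemidef.one (by nlinarith))
    have hE'test : IsTest E' := ⟨hE'1, hE'2⟩
    -- trace computation against any density matrix
    have htrE' : ∀ ω : Matrix (Fin d) (Fin d) ℂ, IsDensityMatrix ω →
        (E' * ω).trace.re = (1 - l) * (E * ω).trace.re + l * t := by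
      intro ω hω
      have : (E' * ω).trace = ((1 - l : ℝ) : ℂ) * (E * ω).trace + ((l * t : ℝ) : ℂ) * ω.trace := by
        rw [hE'def, Matrix.add_mul, Matrix.smul_mul, Matrix.smul_mul, Matrix.trace_add,
          Matrix.trace_smul, Matrix.trace_smul, smul_eq_mul, smul_eq_mul, Matrix.one_mul]
      rw [this, hω.2, (tfacts E ω hE hω).1]
      push_cast
      simp
    set S := {r : ℝ | ∃ ρ ∈ 𝓟, r = ((1 - E) * ρ).trace.re} with hSdef
    obtain ⟨hSne, hSbdd, hS0, hS1⟩ := Sfacts E hE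
    set b := sSup S with hbdef
    set e₀ := sSup {r : ℝ | ∃ ρ ∈ 𝓟, r = ((1 - E') * ρ).trace.re} with he₀def
    obtain ⟨hS'ne, hS'bdd, hS'0, hS'1⟩ := Sfacts E' hE'test
    -- relation between the two suprema
    have hrel : ∀ ρ ∈ 𝓟, ((1 - E') * ρ).trace.re = (1 - l) * ((1 - E) * ρ).trace.re
        + l * (1 - t) := by
      intro ρ hρ
      have hρd := h𝓟 ρ hρ
      obtain ⟨_, hu0, hv, _⟩ := tfacts E ρ hE hρd
      obtain ⟨_, hu0', hv', _⟩ := tfacts E' ρ hE'test hρd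
      have h1 : ((1 - E') * ρ).trace.re = 1 - (E' * ρ).trace.re := by
        rw [hv']; simp
      have h2 : ((1 - E) * ρ).trace.re = 1 - (E * ρ).trace.re := by
        rw [hv]; simp
      rw [h1, h2, htrE' ρ hρd]
      ring
    have he₀le : e₀ ≤ (1 - l) * b + l * (1 - t) := by
      apply csSup_le hS'ne
      rintro r ⟨ρ, hρ, rfl⟩
      rw [hrel ρ hρ]
      have : ((1 - E) * ρ).trace.re ≤ b := le_csSup hSbdd ⟨ρ, hρ, rfl⟩
      nlinarith
    refine ⟨e₀, ⟨⟨hS'0, hS'1⟩, chan2 E', chan2_cptp hE'1 hE'2, ?_, ?_⟩, he₀le⟩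
    · -- error bound on 𝓟
      intro ρ hρ
      have hρd := h𝓟 ρ hρ
      obtain ⟨hu, hu0', hv', hu1'⟩ := tfacts E' ρ hE'test hρd
      have hch : chan2 E' ρ = Matrix.diagonal
          ![(((1 - (E' * ρ).trace.re : ℝ)) : ℂ), (((E' * ρ).trace.re : ℝ) : ℂ)] := by
        rw [chan2_apply, hv', hu]
        simp
      rw [hch, traceDist_diag_ket1 (by linarith) (by ring)]
      refine le_csSup hS'bdd ⟨ρ, hρ, ?_⟩
      rw [hv']
      simp
    · -- Gibbs condition on 𝓔
      intro τ hτ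
      have hτd := h𝓔 τ hτ
      obtain ⟨hu, hu0', hv', hu1'⟩ := tfacts E' τ hE'test hτd
      have hposτ : 0 < (E' * τ).trace.re := by
        rw [htrE' τ hτd]
        have := (tfacts E τ hE hτd).2.1
        nlinarith
      have hleτ : (E' * τ).trace.re ≤ t := by
        rw [htrE' τ hτd]
        have := hconstr τ hτ
        nlinarith
      refine ⟨1 / (E' * τ).trace.re, ?_, ?_⟩
      · rw [div_le_div_iff₀ ht0 hposτ]
        nlinarith
      · have hMinv : 1 / (1 / (E' * τ).trace.re) = (E' * τ).trace.re := by
          rw [one_div_one_div]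
        rw [chan2_apply, piM, hMinv, hv', hu]
        simp
  -- the canonical test: t • 1
  have hE₀test : IsTest (((t : ℝ) : ℂ) • (1 : Matrix (Fin d) (Fin d) ℂ)) := by
    constructor
    · exact psd_smul_real Matrix.PosSemidef.one ht0.le
    · have : (1 : Matrix (Fin d) (Fin d) ℂ) - ((t : ℝ) : ℂ) • 1
          = ((1 - t : ℝ) : ℂ) • (1 : Matrix (Fin d) (Fin d) ℂ) := by
        ext i j
        by_cases h : i = j <;>
          simp [Matrix.sub_apply, Matrix.smul_apply, Matrix.one_apply, h]
      rw [this]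
      exact psd_smul_real Matrix.PosSemidef.one (by linarith)
  have hE₀constr : ∀ τ ∈ 𝓔, ((((t : ℝ) : ℂ) • (1 : Matrix (Fin d) (Fin d) ℂ)) * τ).trace.re ≤ t := by
    intro τ hτ
    have : ((((t : ℝ) : ℂ) • (1 : Matrix (Fin d) (Fin d) ℂ)) * τ).trace = ((t : ℝ) : ℂ) * τ.trace := by
      rw [Matrix.smul_mul, Matrix.trace_smul, smul_eq_mul, Matrix.one_mul]
    rw [this, (h𝓔 τ hτ).2]
    simp
  have hBne : B.Nonempty :=
    ⟨_, _, hE₀test, hE₀constr, rfl⟩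
  have hAbdd : BddBelow A := ⟨0, fun e he => he.1.1⟩
  have hAne : A.Nonempty := by
    obtain ⟨e, he, _⟩ := hcons _ hE₀test hE₀constr (1/2) (by norm_num) (by norm_num)
    exact ⟨e, he⟩
  have hBbdd : BddBelow B := by
    refine ⟨0, ?_⟩
    rintro a ⟨E, hE, _, rfl⟩
    exact (Sfacts E hE).2.2.1
  apply le_antisymm
  · -- sInf A ≤ sInf B
    apply le_csInf hBne
    rintro b ⟨E, hE, hconstr, rfl⟩
    set b₀ := sSup {r : ℝ | ∃ ρ ∈ 𝓟, r = ((1 - E) * ρ).trace.re} with hb₀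
    obtain ⟨_, _, hb00, hb01⟩ := Sfacts E hE
    have key : ∀ ε : ℝ, 0 < ε → sInf A ≤ b₀ + ε := by
      intro ε hε
      set l := min ε (1/2) with hldef
      have hl0 : 0 < l := lt_min hε (by norm_num)
      have hl12 : l ≤ 1/2 := min_le_right _ _
      have hlε : l ≤ ε := min_le_left _ _
      obtain ⟨e, heA, hele⟩ := hcons E hE hconstr l hl0 hl12
      have : (1 - l) * b₀ + l * (1 - t) ≤ b₀ + ε := by nlinarith
      exact le_trans (csInf_le hAbdd heA) (le_trans hele this)
    by_contra hcon
    push_neg at hcon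
    have := key ((sInf A - b₀) / 2) (by linarith)
    linarith
  · -- sInf B ≤ sInf A
    apply le_csInf hAne
    rintro e ⟨⟨he0, he1⟩, F, hF, herr, hGibbs⟩
    set C := choiMatrix F with hC
    set E : Matrix (Fin d) (Fin d) ℂ :=
      (C.submatrix (fun i => (i, 1)) (fun i => (i, (1 : Fin 2))))ᵀ with hEdef
    set E₀ : Matrix (Fin d) (Fin d) ℂ :=
      (C.submatrix (fun i => (i, 0)) (fun i => (i, (0 : Fin 2))))ᵀ with hE₀def
    have hEpsd : E.PosSemidef := (hF.1.submatrix _).transpose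
    have hE₀psd : E₀.PosSemidef := (hF.1.submatrix _).transpose
    have h1E : (1 : Matrix (Fin d) (Fin d) ℂ) - E = E₀ := by
      ext i j
      have htr2 : E₀ i j + E i j = (F (Matrix.single j i 1)).trace := by
        simp [hEdef, hE₀def, hC, choiMatrix, Matrix.trace, Matrix.diag, Fin.sum_univ_two]
      rw [hF.2] at htr2
      have htr3 : (Matrix.single j i (1:ℂ)).trace = (1 : Matrix (Fin d) (Fin d) ℂ) i j := by
        by_cases h : i = j
        · simp [h, Matrix.one_apply, Matrix.trace, Matrix.diag, Matrix.single,
            Finset.sum_ite_eq]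
        · rw [Matrix.one_apply_ne h]
          simp only [Matrix.trace, Matrix.diag, Matrix.single, Matrix.of_apply]
          rw [Finset.sum_eq_zero]
          intro k _
          simp only [ite_eq_right_iff]
          rintro ⟨h1, h2⟩
          exact absurd (h2.trans h1.symm) h
      rw [htr3] at htr2
      rw [Matrix.sub_apply, ← htr2]
      ring
    have hEtest : IsTest E := ⟨hEpsd, h1E ▸ hE₀psd⟩
    have htrE : ∀ X, (E * X).trace = F X 1 1 := fun X => trace_Eb F X 1
    have htrE₀ : ∀ X, ((1 - E) * X).trace = F X 0 0 := by
      intro X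
      rw [h1E]
      exact trace_Eb F X 0
    have hconstr : ∀ τ ∈ 𝓔, (E * τ).trace.re ≤ t := by
      intro τ hτ
      obtain ⟨M, hM, hFτ⟩ := hGibbs τ hτ
      have h1t : 0 < 1/t := by positivity
      have hMpos : 0 < M := lt_of_lt_of_le h1t hM
      have : (E * τ).trace = ((1/M : ℝ) : ℂ) := by
        rw [htrE τ, hFτ, piM]
        simp
      rw [this]
      simp only [Complex.ofReal_re]
      have h1M : 1/M ≤ 1/(1/t) := one_div_le_one_div_of_le h1t hM
      rwa [one_div_one_div] at h1M
    refine le_trans (csInf_le hBbdd ⟨E, hEtest, hconstr, rfl⟩) ?_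
    apply csSup_le (Sfacts E hEtest).1
    rintro r ⟨ρ, hρ, rfl⟩
    have hρd := h𝓟 ρ hρ
    -- the output state
    have hσH : (F ρ).IsHermitian := FX_herm F hF.1.1 hρd.1.1
    have hσtr : (F ρ).trace = 1 := by rw [hF.2, hρd.2]
    have hΔH : (F ρ - ket1).IsHermitian := by
      apply hσH.sub
      show _ᴴ = _
      ext i j
      fin_cases i <;> fin_cases j <;> simp [ket1, Matrix.diagonal, Matrix.conjTranspose_apply]
    have hΔtr : (F ρ - ket1).trace = 0 := by
      rw [Matrix.trace_sub, hσtr]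
      simp [ket1, Matrix.trace_diagonal, Fin.sum_univ_two]
    have hr : ((1 - E) * ρ).trace.re = ((F ρ - ket1) 0 0).re := by
      rw [htrE₀ ρ]
      simp [Matrix.sub_apply, ket1, Matrix.diagonal]
    rw [hr]
    have hTD := herr ρ hρ
    rw [traceDist, traceNorm_two _ hΔH hΔtr] at hTD
    have hsq : |((F ρ - ket1) 0 0).re| ≤
        Real.sqrt (((F ρ - ket1) 0 0).re ^ 2 + Complex.normSq ((F ρ - ket1) 0 1)) := by
      rw [← Real.sqrt_sq_eq_abs]
      exact Real.sqrt_le_sqrt (by nlinarith [Complex.normSq_nonneg ((F ρ - ket1) 0 1)])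
    have := le_abs_self ((F ρ - ket1) 0 0).re
    linarith
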